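/- For c > 1, the derivative of g(x) = x · log(c^(1/x) - 1) is negative for all x > 0; in particular log(c^(1/x) - 1) - (c^(1/x)/(c^(1/x) - 1)) · (log c)/x < 0. -/

import Mathlib

open Real

lemma key_ineq (t : ℝ) (ht : 1 < t) : Real.log (t - 1) < t / (t - 1) * Real.log t := by
  have h1 : 0 < t - 1 := by linarith
  have hlogt : 0 < Real.log t := Real.log_pos ht
  have hdiv : 1 ≤ t / (t - 1) := (one_le_div h1).mpr (by linarith)
  rcases le_or_gt (t - 1) 1 with h | h
  · have : Real.log (t - 1) ≤ 0 := Real.log_nonpos (by linarith) h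
    nlinarith
  · have h2 : Real.log (t - 1) < Real.log t := Real.log_lt_log h1 (by linarith)
    nlinarith

theorem g_deriv_neg (c : ℝ) (hc : 1 < c) (x : ℝ) (hx : 0 < x) :
    deriv (fun y : ℝ => y * Real.log (c ^ (1 / y) - 1)) x < 0 ∧
    Real.log (c ^ (1 / x) - 1) -
      (c ^ (1 / x) / (c ^ (1 / x) - 1)) * (Real.log c / x) < 0 := by
  have hc0 : 0 < c := by linarith
  set t := c ^ (1 / x) with htdef
  have ht : 1 < t := Real.one_lt_rpow_iff_of_pos hc0 |>.mpr (Or.inl ⟨hc, by positivity⟩)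
  have ht1 : 0 < t - 1 := by linarith
  have hlog : Real.log c / x = Real.log t := by
    rw [htdef, Real.log_rpow hc0]; ring
  -- the expression
  have hexpr : Real.log (t - 1) - (t / (t - 1)) * (Real.log c / x) < 0 := by
    rw [hlog]
    have := key_ineq t ht
    linarith
  -- derivative
  have hinv : HasDerivAt (fun y : ℝ => 1 / y) (-(x ^ 2)⁻¹) x := by
    simpa using (hasDerivAt_inv (ne_of_gt hx))
  have hrpow : HasDerivAt (fun y : ℝ => c ^ (1 / y)) (t * Real.log c * (-(x ^ 2)⁻¹)) x := by
    have h := (hasStrictDerivAt_const_rpow hc0 (1 / x)).hasDerivAt.comp x hinv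
    exact h
  have hsub : HasDerivAt (fun y : ℝ => c ^ (1 / y) - 1) (t * Real.log c * (-(x ^ 2)⁻¹)) x := by
    simpa using hrpow.sub_const 1
  have hlogd : HasDerivAt (fun y : ℝ => Real.log (c ^ (1 / y) - 1))
      (t * Real.log c * (-(x ^ 2)⁻¹) / (t - 1)) x :=
    hsub.log (ne_of_gt ht1)
  have hmul : HasDerivAt (fun y : ℝ => y * Real.log (c ^ (1 / y) - 1))
      (1 * Real.log (t - 1) + x * (t * Real.log c * (-(x ^ 2)⁻¹) / (t - 1))) x :=
    (hasDerivAt_id x).mul hlogd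
  have heq : 1 * Real.log (t - 1) + x * (t * Real.log c * (-(x ^ 2)⁻¹) / (t - 1)) =
      Real.log (t - 1) - (t / (t - 1)) * (Real.log c / x) := by
    field_simp
    ring
  rw [hmul.deriv, heq]
  exact ⟨hexpr, hexpr⟩
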